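/- For every nonzero ε ∈ ℂ, the H-orbit of v_ε is dense in Z: the closure (with respect to the natural topology of M₂(ℂ) × M₂(ℂ) ≅ ℂ⁸) of the set { h · v_ε : h ∈ H } equals Z. -/

import Mathlib

open Matrix

/-- The matrix `J = !![0,-1; 1,0]`. -/
def MJ : Matrix (Fin 2) (Fin 2) ℂ := !![0, -1; 1, 0]

/-- The matrix `T = !![0,1; 1,0]`. -/
def MT : Matrix (Fin 2) (Fin 2) ℂ := !![0, 1; 1, 0]

/-- The variety `Z` of pairs of 2×2 matrices. -/
def Z : Set (Matrix (Fin 2) (Fin 2) ℂ × Matrix (Fin 2) (Fin 2) ℂ) :=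
  {p | p.1.det = 0 ∧ p.2.det = 0 ∧ p.1 * MJ * p.2ᵀ = 0 ∧ p.2ᵀ * MT * p.1 = 0}

/-- For `g = !![a,b; c,d]` with determinant `Δ`, `g* = Δ⁻¹ • !![a,-b; -c,d]`. -/
noncomputable def gstar (g : Matrix (Fin 2) (Fin 2) ℂ) : Matrix (Fin 2) (Fin 2) ℂ :=
  (g.det)⁻¹ • !![g 0 0, -(g 0 1); -(g 1 0), g 1 1]

/-- The group `H = SL₂(ℂ) × GL₂(ℂ) × ℂˣ`. -/
abbrev H := Matrix.SpecialLinearGroup (Fin 2) ℂ × GL (Fin 2) ℂ × ℂˣ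

/-- The action `(h₁,h₂,z)·(B₁,B₂) = (z · h₂* · B₁ · h₁⁻¹, h₂ · B₂ · h₁⁻¹)`. -/
noncomputable def act (h : H) (v : Matrix (Fin 2) (Fin 2) ℂ × Matrix (Fin 2) (Fin 2) ℂ) :
    Matrix (Fin 2) (Fin 2) ℂ × Matrix (Fin 2) (Fin 2) ℂ :=
  ((h.2.2 : ℂ) • (gstar (h.2.1 : Matrix (Fin 2) (Fin 2) ℂ) * v.1 *
      ((h.1⁻¹ : Matrix.SpecialLinearGroup (Fin 2) ℂ) : Matrix (Fin 2) (Fin 2) ℂ)),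
    (h.2.1 : Matrix (Fin 2) (Fin 2) ℂ) * v.2 *
      ((h.1⁻¹ : Matrix.SpecialLinearGroup (Fin 2) ℂ) : Matrix (Fin 2) (Fin 2) ℂ))

/-- The element `v_ε = ( !![0,ε; 0,0], !![0,ε; 0,0] )`. -/
def veps (ε : ℂ) : Matrix (Fin 2) (Fin 2) ℂ × Matrix (Fin 2) (Fin 2) ℂ :=
  (!![0, ε; 0, 0], !![0, ε; 0, 0])

def sg (w : Fin 2 → ℂ) : Fin 2 → ℂ := ![w 0, -(w 1)]
noncomputable def F (t : ℂ) (w r : Fin 2 → ℂ) :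
    Matrix (Fin 2) (Fin 2) ℂ × Matrix (Fin 2) (Fin 2) ℂ :=
  (vecMulVec (t • sg w) r, vecMulVec w r)

lemma act_veps (ε : ℂ) (h : H) :
    act h (veps ε) =
      F ((h.2.2 : ℂ) * ((h.2.1 : Matrix (Fin 2) (Fin 2) ℂ).det)⁻¹)
        (fun i => (h.2.1 : Matrix (Fin 2) (Fin 2) ℂ) i 0)
        (fun j => ε * ((h.1⁻¹ : Matrix.SpecialLinearGroup (Fin 2) ℂ) :
          Matrix (Fin 2) (Fin 2) ℂ) 1 j) := by
  obtain ⟨h1, h2, z⟩ := h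
  refine Prod.ext ?_ ?_ <;>
  · ext i j
    fin_cases i <;> fin_cases j <;>
      simp [act, veps, F, gstar, sg, vecMulVec_apply, Matrix.mul_apply, Matrix.vecMul,
        dotProduct, Fin.sum_univ_two, Matrix.smul_apply] <;> ring

lemma F_mem_Z (t : ℂ) (w r : Fin 2 → ℂ) : F t w r ∈ Z := by
  refine ⟨?_, ?_, ?_, ?_⟩
  · rw [Matrix.det_fin_two]; simp [F, vecMulVec_apply, sg]; ring
  · rw [Matrix.det_fin_two]; simp [F, vecMulVec_apply]; ring
  · ext i j
    fin_cases i <;> fin_cases j <;>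
      simp [F, MJ, vecMulVec_apply, sg, Matrix.mul_apply, Fin.sum_univ_two, -cons_vecMulVec, -vecMulVec_cons] <;> ring
  · ext i j
    fin_cases i <;> fin_cases j <;>
      simp [F, MT, vecMulVec_apply, sg, Matrix.mul_apply, Fin.sum_univ_two, -cons_vecMulVec, -vecMulVec_cons] <;> ring

lemma isClosed_Z : IsClosed Z := by
  have h1 : Continuous fun p : Matrix (Fin 2) (Fin 2) ℂ × Matrix (Fin 2) (Fin 2) ℂ =>
      p.1.det := continuous_fst.matrix_det
  have h2 : Continuous fun p : Matrix (Fin 2) (Fin 2) ℂ × Matrix (Fin 2) (Fin 2) ℂ =>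
      p.2.det := continuous_snd.matrix_det
  have h3 : Continuous fun p : Matrix (Fin 2) (Fin 2) ℂ × Matrix (Fin 2) (Fin 2) ℂ =>
      p.1 * MJ * p.2ᵀ :=
    (continuous_fst.matrix_mul continuous_const).matrix_mul continuous_snd.matrix_transpose
  have h4 : Continuous fun p : Matrix (Fin 2) (Fin 2) ℂ × Matrix (Fin 2) (Fin 2) ℂ =>
      p.2ᵀ * MT * p.1 :=
    (continuous_snd.matrix_transpose.matrix_mul continuous_const).matrix_mul continuous_fst
  have : Z = {p | p.1.det = 0} ∩ ({p | p.2.det = 0} ∩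
      ({p | p.1 * MJ * p.2ᵀ = 0} ∩ {p | p.2ᵀ * MT * p.1 = 0})) := by
    ext p; simp [Z, Set.mem_inter_iff, and_assoc]
  rw [this]
  exact ((isClosed_eq h1 continuous_const)).inter
    (((isClosed_eq h2 continuous_const)).inter
      (((isClosed_eq h3 continuous_const)).inter ((isClosed_eq h4 continuous_const))))

/-- SL₂ matrix with prescribed nonzero bottom row. -/
lemma exists_sl2_row (p q : ℂ) (h : ¬(p = 0 ∧ q = 0)) :
    ∃ M : Matrix.SpecialLinearGroup (Fin 2) ℂ,
      (M : Matrix (Fin 2) (Fin 2) ℂ) 1 0 = p ∧ (M : Matrix (Fin 2) (Fin 2) ℂ) 1 1 = q := by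
  by_cases hq : q = 0
  · have hp : p ≠ 0 := fun hp => h ⟨hp, hq⟩
    refine ⟨⟨!![0, -p⁻¹; p, q], ?_⟩, by simp, by simp⟩
    rw [Matrix.det_fin_two]; simp [hq, hp]
  · refine ⟨⟨!![q⁻¹, 0; p, q], ?_⟩, by simp, by simp⟩
    rw [Matrix.det_fin_two]; simp; field_simp

/-- F t w r is in the orbit when t, w, r are nonzero. -/
lemma F_mem_orbit {ε : ℂ} (hε : ε ≠ 0) {t : ℂ} (ht : t ≠ 0) {w r : Fin 2 → ℂ}
    (hw : w ≠ 0) (hr : r ≠ 0) : ∃ h : H, act h (veps ε) = F t w r := by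
  -- choose g with first column w
  have hw' : ¬(w 0 = 0 ∧ w 1 = 0) := by
    intro ⟨h0, h1⟩; apply hw; funext i; fin_cases i <;> assumption
  have hr' : ¬(r 0 / ε = 0 ∧ r 1 / ε = 0) := by
    intro ⟨h0, h1⟩
    apply hr; funext i
    fin_cases i
    · simpa [hε, div_eq_zero_iff] using h0
    · simpa [hε, div_eq_zero_iff] using h1
  obtain ⟨M, hM0, hM1⟩ := exists_sl2_row _ _ hr'
  obtain ⟨g, hdg, hg0, hg1⟩ : ∃ g : Matrix (Fin 2) (Fin 2) ℂ,
      g.det ≠ 0 ∧ g 0 0 = w 0 ∧ g 1 0 = w 1 := by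
    by_cases h0 : w 0 = 0
    · have h1 : w 1 ≠ 0 := fun h1 => hw' ⟨h0, h1⟩
      exact ⟨!![w 0, -1; w 1, 0], by rw [Matrix.det_fin_two]; simpa using h1, by simp, by simp⟩
    · exact ⟨!![w 0, 0; w 1, 1], by rw [Matrix.det_fin_two]; simpa using h0, by simp, by simp⟩
  refine ⟨⟨M⁻¹, Matrix.GeneralLinearGroup.mkOfDetNeZero g hdg,
    Units.mk0 (t * g.det) (mul_ne_zero ht hdg)⟩, ?_⟩
  rw [act_veps]
  have hco : ((Matrix.GeneralLinearGroup.mkOfDetNeZero g hdg : GL (Fin 2) ℂ) :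
      Matrix (Fin 2) (Fin 2) ℂ) = g := rfl
  have hinv : ((M⁻¹)⁻¹ : Matrix.SpecialLinearGroup (Fin 2) ℂ) = M := inv_inv M
  simp only [hco, hinv, Units.val_mk0]
  congr 1
  · rw [mul_assoc, mul_inv_cancel₀ hdg, mul_one]
  · funext i; fin_cases i <;> simp [hg0, hg1]
  · funext j
    fin_cases j <;> simp [hM0, hM1] <;> field_simp

lemma sg_smul (c : ℂ) (w : Fin 2 → ℂ) : sg (c • w) = c • sg w := by
  funext i; fin_cases i <;> simp [sg]

lemma sg_sg (w : Fin 2 → ℂ) : sg (sg w) = w := by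
  funext i; fin_cases i <;> simp [sg]

lemma sg_ne_zero {w : Fin 2 → ℂ} (hw : w ≠ 0) : sg w ≠ 0 := by
  intro h
  apply hw
  have := congrArg sg h
  rw [sg_sg] at this
  rw [this]
  funext i; fin_cases i <;> simp [sg]

lemma vecMulVec_smul_left (c : ℂ) (v r : Fin 2 → ℂ) :
    vecMulVec (c • v) r = c • vecMulVec v r := by
  ext i j; simp [vecMulVec_apply, mul_assoc]

lemma F_eq (t : ℂ) (w r : Fin 2 → ℂ) :
    F t w r = (t • vecMulVec (sg w) r, vecMulVec w r) := by
  rw [F, vecMulVec_smul_left]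

/-- Proportionality of 2-vectors. -/
lemma vec_prop {r v : Fin 2 → ℂ} (hr : r ≠ 0) (h : v 0 * r 1 = v 1 * r 0) :
    ∃ c : ℂ, v = c • r := by
  by_cases h0 : r 0 = 0
  · have h1 : r 1 ≠ 0 := by
      intro h1; exact hr (funext fun i => by fin_cases i <;> simp [h0, h1])
    refine ⟨v 1 / r 1, funext fun i => ?_⟩
    fin_cases i
    · have hv0 : v 0 = 0 := by
        have := h; rw [h0, mul_zero] at this
        exact (mul_eq_zero.mp this).resolve_right h1
      simp [hv0, h0]
    · simp [Pi.smul_apply]; field_simp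
  · refine ⟨v 0 / r 0, funext fun i => ?_⟩
    fin_cases i
    · simp [Pi.smul_apply]; field_simp
    · simp [Pi.smul_apply]
      field_simp
      linear_combination -h

lemma exists_ne_zero {f : Fin 2 → ℂ} (hf : f ≠ 0) : ∃ i, f i ≠ 0 := by
  by_contra h
  push_neg at h
  exact hf (funext fun i => h i)

/-- a 2×2 matrix with zero det and nonzero is rank one -/
lemma rank_one {M : Matrix (Fin 2) (Fin 2) ℂ} (hd : M.det = 0) (hM : M ≠ 0) :
    ∃ w r : Fin 2 → ℂ, w ≠ 0 ∧ r ≠ 0 ∧ M = vecMulVec w r := by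
  have hab : ∃ a b, M a b ≠ 0 := by
    by_contra h
    push_neg at h
    exact hM (by ext i j; simpa using h i j)
  obtain ⟨a, b, hab⟩ := hab
  refine ⟨fun i => M i b, fun j => M a j / M a b, ?_, ?_, ?_⟩
  · intro h; exact hab (congrFun h a)
  · intro h
    have := congrFun h b
    simp only [Pi.zero_apply, div_eq_zero_iff] at this
    tauto
  · rw [Matrix.det_fin_two] at hd
    ext i j
    simp only [vecMulVec_apply]
    rw [mul_div_assoc', eq_div_iff hab]
    fin_cases a <;> fin_cases b <;> fin_cases i <;> fin_cases j <;> simp_all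
    all_goals first
      | ring1
      | linear_combination hd
      | linear_combination -hd
      | linear_combination 2*hd
      | linear_combination -2*hd

/-- structure of elements of Z with nonzero second component -/
lemma Z_struct {p : Matrix (Fin 2) (Fin 2) ℂ × Matrix (Fin 2) (Fin 2) ℂ}
    (hp : p ∈ Z) (h2 : p.2 ≠ 0) :
    ∃ (lam : ℂ) (w r : Fin 2 → ℂ), w ≠ 0 ∧ r ≠ 0 ∧
      p.1 = vecMulVec (lam • sg w) r ∧ p.2 = vecMulVec w r := by
  obtain ⟨hd1, hd2, hJ, hT⟩ := hp
  obtain ⟨w, r, hw, hr, hB2⟩ := rank_one hd2 h2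
  obtain ⟨i0, hi0⟩ := exists_ne_zero hr
  obtain ⟨j0, hj0⟩ := exists_ne_zero hw
  -- columns of p.1 are proportional to sg w
  have eq1 : ∀ j, w 0 * p.1 1 j + w 1 * p.1 0 j = 0 := by
    intro j
    have h' := congrFun (congrFun hT i0) j
    simp [hB2, Matrix.mul_apply, Fin.sum_univ_two, vecMulVec_apply, MT] at h'
    have h'' : r i0 * (w 0 * p.1 1 j + w 1 * p.1 0 j) = 0 := by linear_combination h'
    exact (mul_eq_zero.mp h'').resolve_left hi0
  have eq2 : ∀ i, p.1 i 1 * r 0 - p.1 i 0 * r 1 = 0 := by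
    intro i
    have h' := congrFun (congrFun hJ i) j0
    simp [hB2, Matrix.mul_apply, Fin.sum_univ_two, vecMulVec_apply, MJ] at h'
    have h'' : w j0 * (p.1 i 1 * r 0 - p.1 i 0 * r 1) = 0 := by linear_combination h'
    exact (mul_eq_zero.mp h'').resolve_left hj0
  have hsgw := sg_ne_zero hw
  have hcol : ∀ j, ∃ c : ℂ, (fun i => p.1 i j) = c • sg w := by
    intro j
    apply vec_prop hsgw
    show p.1 0 j * sg w 1 = p.1 1 j * sg w 0
    simp only [sg, Matrix.cons_val_zero, Matrix.cons_val_one, Matrix.head_cons]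
    linear_combination -(eq1 j)
  obtain ⟨s0, hs0⟩ := hcol 0
  obtain ⟨s1, hs1⟩ := hcol 1
  obtain ⟨k0, hk0⟩ := exists_ne_zero hsgw
  have hs0' : ∀ i, p.1 i 0 = s0 * sg w i := fun i => congrFun hs0 i
  have hs1' : ∀ i, p.1 i 1 = s1 * sg w i := fun i => congrFun hs1 i
  have hsr : s1 * r 0 = s0 * r 1 := by
    have := eq2 k0
    rw [hs0' k0, hs1' k0] at this
    have h'' : sg w k0 * (s1 * r 0 - s0 * r 1) = 0 := by linear_combination this
    have := (mul_eq_zero.mp h'').resolve_left hk0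
    linear_combination this
  obtain ⟨lam, hlam⟩ : ∃ c : ℂ, (![s0, s1] : Fin 2 → ℂ) = c • r := by
    apply vec_prop hr
    simpa using hsr.symm
  have hl0 : s0 = lam * r 0 := by simpa using congrFun hlam 0
  have hl1 : s1 = lam * r 1 := by simpa using congrFun hlam 1
  refine ⟨lam, w, r, hw, hr, ?_, hB2⟩
  ext i j
  fin_cases j
  · rw [vecMulVec_apply]
    show p.1 i 0 = (lam • sg w) i * r 0
    rw [hs0' i, hl0, Pi.smul_apply, smul_eq_mul]; ring
  · rw [vecMulVec_apply]
    show p.1 i 1 = (lam • sg w) i * r 1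
    rw [hs1' i, hl1, Pi.smul_apply, smul_eq_mul]; ring

instance : FirstCountableTopology (Matrix (Fin 2) (Fin 2) ℂ) :=
  inferInstanceAs (FirstCountableTopology (Fin 2 → Fin 2 → ℂ))

lemma F_smul (t c : ℂ) (w r : Fin 2 → ℂ) :
    F t (c • w) r = ((t * c) • vecMulVec (sg w) r, c • vecMulVec w r) := by
  rw [F, sg_smul, smul_smul, vecMulVec_smul_left, vecMulVec_smul_left]

lemma tendsto_inv_succ :
    Filter.Tendsto (fun n : ℕ => ((n : ℂ) + 1)⁻¹) Filter.atTop (nhds 0) := by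
  have h := tendsto_one_div_add_atTop_nhds_zero_nat (𝕜 := ℝ)
  have h2 := (Complex.continuous_ofReal.tendsto 0).comp h
  have he : (Complex.ofReal ∘ fun n : ℕ => 1 / ((n : ℝ) + 1)) =
      fun n : ℕ => ((n : ℂ) + 1)⁻¹ := by
    funext n
    simp only [Function.comp, one_div]
    push_cast
    ring
  rw [he] at h2
  simpa using h2

lemma e1_ne_zero : (![1, 0] : Fin 2 → ℂ) ≠ 0 := by
  intro h; simpa using congrFun h 0

lemma succ_ne_zero' (n : ℕ) : ((n : ℂ) + 1) ≠ 0 := Nat.cast_add_one_ne_zero n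

theorem stmt5 (ε : ℂ) (hε : ε ≠ 0) :
    closure {w : Matrix (Fin 2) (Fin 2) ℂ × Matrix (Fin 2) (Fin 2) ℂ |
      ∃ h : H, act h (veps ε) = w} = Z := by
  apply Set.Subset.antisymm
  · apply closure_minimal _ isClosed_Z
    rintro p ⟨h, rfl⟩
    rw [act_veps]
    exact F_mem_Z _ _ _
  · intro p hp
    rw [mem_closure_iff_seq_limit]
    by_cases h2 : p.2 = 0
    · by_cases h1 : p.1 = 0
      · -- p = 0 : approximate by F 1 (cₙ • e₁) e₁
        refine ⟨fun n => F 1 (((n : ℂ) + 1)⁻¹ • ![1, 0]) ![1, 0], fun n =>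
          F_mem_orbit hε one_ne_zero
            (smul_ne_zero (inv_ne_zero (succ_ne_zero' n)) e1_ne_zero) e1_ne_zero, ?_⟩
        have hx : ∀ n : ℕ, F 1 (((n : ℂ) + 1)⁻¹ • ![1, 0]) ![1, 0] =
            (((n : ℂ) + 1)⁻¹ • vecMulVec (sg ![1, 0]) ![1, 0],
             ((n : ℂ) + 1)⁻¹ • vecMulVec ![1, 0] ![1, 0]) := by
          intro n
          rw [F_smul, one_mul]
        have : p = ((0 : ℂ) • vecMulVec (sg ![1, 0]) ![1, 0],
            (0 : ℂ) • vecMulVec ![1, 0] ![1, 0]) := by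
          rw [zero_smul, zero_smul]; exact Prod.ext h1 h2
        rw [this]
        simp only [hx]
        exact (tendsto_inv_succ.smul_const _).prodMk_nhds (tendsto_inv_succ.smul_const _)
      · -- B₂ = 0, B₁ ≠ 0
        obtain ⟨hd1, _, _, _⟩ := hp
        obtain ⟨u, r, hu, hr, hB1⟩ := rank_one hd1 h1
        refine ⟨fun n => F ((n : ℂ) + 1) (((n : ℂ) + 1)⁻¹ • sg u) r, fun n =>
          F_mem_orbit hε (succ_ne_zero' n)
            (smul_ne_zero (inv_ne_zero (succ_ne_zero' n)) (sg_ne_zero hu)) hr, ?_⟩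
        have hx : ∀ n : ℕ, F ((n : ℂ) + 1) (((n : ℂ) + 1)⁻¹ • sg u) r =
            (vecMulVec u r, ((n : ℂ) + 1)⁻¹ • vecMulVec (sg u) r) := by
          intro n
          rw [F_smul, sg_sg, mul_inv_cancel₀ (succ_ne_zero' n), one_smul]
        have : p = (vecMulVec u r, (0 : ℂ) • vecMulVec (sg u) r) := by
          rw [zero_smul]; exact Prod.ext hB1 h2
        rw [this]
        simp only [hx]
        exact tendsto_const_nhds.prodMk_nhds (tendsto_inv_succ.smul_const _)
    · obtain ⟨lam, w, r, hw, hr, hB1, hB2⟩ := Z_struct hp h2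
      by_cases hlam : lam = 0
      · refine ⟨fun n => F ((n : ℂ) + 1)⁻¹ w r, fun n =>
          F_mem_orbit hε (inv_ne_zero (succ_ne_zero' n)) hw hr, ?_⟩
        have : p = ((0 : ℂ) • vecMulVec (sg w) r, vecMulVec w r) := by
          refine Prod.ext ?_ hB2
          rw [hB1, hlam, zero_smul, zero_smul]
          ext i j; simp [vecMulVec_apply]
        rw [this]
        simp only [F_eq]
        exact (tendsto_inv_succ.smul_const _).prodMk_nhds tendsto_const_nhds
      · refine ⟨fun _ => F lam w r, fun _ => F_mem_orbit hε hlam hw hr, ?_⟩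
        have : p = F lam w r := Prod.ext (by rw [hB1, F]) (by rw [hB2, F])
        rw [this]
        exact tendsto_const_nhds
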